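/- arXiv:1901.10967 — 2 statements merged into one kernel-verified Lean document; each statement's English description precedes it below -/
import Mathlib

section
/- Let d_0 : ℝ → ℝ be real-analytic at α with a zero of exact order μ ≥ 1 at α (d_0(α) = d_0'(α) = ... = d_0^{(μ−1)}(α) = 0 and d_0^{(μ)}(α) ≠ 0). Suppose (ε_n) is a real sequence with ε_n → 0 and (ζ_n) a real sequence with ∑ ζ_n² < ∞, such that d_0(α + ε_n) + ζ_n = 0 for all n. Then ∑_n ε_n^{2μ} < ∞, i.e., ε_n ∈ l_{2μ}. -/
open Filter

theorem stmt11 (d0 : ℝ → ℝ) (α : ℝ) (hA : AnalyticAt ℝ d0 α)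
    (μ : ℕ) (hμ : 1 ≤ μ)
    (hzero : ∀ j < μ, iteratedDeriv j d0 α = 0)
    (hne : iteratedDeriv μ d0 α ≠ 0)
    (ε : ℕ → ℝ) (hε : Tendsto ε atTop (nhds 0))
    (ζ : ℕ → ℝ) (hζ : Summable (fun n => (ζ n) ^ 2))
    (heq : ∀ n, d0 (α + ε n) + ζ n = 0) :
    Summable (fun n => |ε n| ^ (2 * μ)) := by
  obtain ⟨p, hp⟩ := hA
  obtain ⟨r, hball⟩ := hp
  -- coefficients of p in terms of iterated derivatives
  have hcoeff : ∀ n : ℕ, (Nat.factorial n : ℝ) • p.coeff n = iteratedDeriv n d0 α := by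
    intro n
    have h := hball.factorial_smul (1 : ℝ) n
    rw [iteratedDeriv_eq_iteratedFDeriv, ← h]
    simp only [FormalMultilinearSeries.coeff, Nat.cast_smul_eq_nsmul]
    rfl
  have hpμ : p μ ≠ 0 := by
    intro h
    apply hne
    rw [← hcoeff μ, FormalMultilinearSeries.coeff_eq_zero.mpr h, smul_zero]
  have hpne : p ≠ 0 := fun h => hpμ (by simp [h])
  have horder : p.order = μ := by
    apply le_antisymm
    · exact Nat.sInf_le hpμ
    · apply le_csInf ⟨μ, hpμ⟩
      intro m hm
      by_contra hlt
      push_neg at hlt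
      apply hm
      rw [← FormalMultilinearSeries.coeff_eq_zero]
      have h1 := hcoeff m
      rw [hzero m hlt] at h1
      have : (Nat.factorial m : ℝ) ≠ 0 := Nat.cast_ne_zero.mpr (Nat.factorial_ne_zero m)
      exact (smul_eq_zero.mp h1).resolve_left this
  have hgne := HasFPowerSeriesAt.iterate_dslope_fslope_ne_zero (p := p) ⟨r, hball⟩ hpne
  have hgcont := (HasFPowerSeriesAt.has_fpower_series_iterate_dslope_fslope (f := d0) p.order
    ⟨r, hball⟩).continuousAt
  have heqg := HasFPowerSeriesAt.eq_pow_order_mul_iterate_dslope (f := d0) ⟨r, hball⟩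
  rw [horder] at hgne hgcont heqg
  set g : ℝ → ℝ := (Function.swap dslope α)^[μ] d0 with hg
  -- lower bound: |d0 z| ≥ c * |z - α| ^ μ near α
  set c : ℝ := |g α| / 2 with hc
  have hcpos : 0 < c := by positivity
  have hlower : ∀ᶠ z in nhds α, c * |z - α| ^ μ ≤ |d0 z| := by
    have habs : ∀ᶠ z in nhds α, c ≤ |g z| := by
      have hlt : c < |g α| := by rw [hc]; linarith [abs_pos.mpr hgne]
      exact ((continuous_abs.continuousAt).comp hgcont).eventually (eventually_ge_nhds hlt)
    filter_upwards [Filter.Eventually.of_forall heqg, habs] with z h1 h2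
    rw [h1, smul_eq_mul, abs_mul, abs_pow]
    calc c * |z - α| ^ μ ≤ |g z| * |z - α| ^ μ := by
          apply mul_le_mul_of_nonneg_right h2 (by positivity)
      _ = |z - α| ^ μ * |g z| := mul_comm _ _
  -- transfer to the sequence
  rw [Metric.eventually_nhds_iff] at hlower
  obtain ⟨δ, hδpos, hδ⟩ := hlower
  have hev : ∀ᶠ n in atTop, |ε n| ^ (2 * μ) ≤ (1 / c ^ 2) * (ζ n ^ 2) := by
    have hsmall : ∀ᶠ n in atTop, |ε n| < δ := by
      have := Metric.tendsto_atTop.mp hε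
      obtain ⟨N, hN⟩ := this δ hδpos
      filter_upwards [eventually_ge_atTop N] with n hn
      simpa [Real.dist_eq] using hN n hn
    filter_upwards [hsmall] with n hn
    have hdist : dist (α + ε n) α < δ := by
      simp [Real.dist_eq, abs_of_nonneg, hn]
    have h1 : c * |ε n| ^ μ ≤ |d0 (α + ε n)| := by
      have := hδ hdist
      simpa using this
    have h2 : d0 (α + ε n) = -ζ n := by linarith [heq n]
    rw [h2, abs_neg] at h1
    have h3 : (c * |ε n| ^ μ) ^ 2 ≤ |ζ n| ^ 2 := by
      apply pow_le_pow_left₀ (by positivity) h1 2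
    rw [mul_pow, sq_abs] at h3
    have h4 : (|ε n| ^ μ) ^ 2 ≤ (1 / c ^ 2) * ζ n ^ 2 := by
      rw [div_mul_eq_mul_div, one_mul, le_div_iff₀ (by positivity)]
      linarith [h3]
    calc |ε n| ^ (2 * μ) = (|ε n| ^ μ) ^ 2 := by rw [← pow_mul, mul_comm]
      _ ≤ (1 / c ^ 2) * ζ n ^ 2 := h4
  apply summable_of_isBigO_nat hζ
  apply Asymptotics.IsBigO.of_bound (1 / c ^ 2)
  filter_upwards [hev] with n hn
  have h0 : (0 : ℝ) ≤ |ε n| ^ (2 * μ) := by positivity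
  rw [Real.norm_eq_abs, Real.norm_eq_abs, abs_of_nonneg h0, abs_of_nonneg (sq_nonneg (ζ n))]
  exact hn
end

section
/- Let (λ_n) and (λ_n⁰) be sequences of positive reals with λ_n⁰ → ∞ and ∑ |λ_n − λ_n⁰|/λ_n⁰ < ∞. Suppose F and F₀ are functions on (−∞,0) with F(λ)/F₀(λ) = C·∏_{n=1}^∞ (λ_n⁰/λ_n)·(1 + (λ_n − λ_n⁰)/(λ_n⁰ − λ)) for all λ < 0, and lim_{λ→−∞} F(λ)/F₀(λ) = 1. Then C = ∏_{n=1}^∞ (λ_n/λ_n⁰), and hence F(λ)/F₀(λ) = ∏_{n=1}^∞ (λ_n − λ)/(λ_n⁰ − λ) for all λ < 0. -/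
open Filter Real

private lemma aux_abs_log_one_add {t : ℝ} (ht : |t| ≤ 1/2) :
    |Real.log (1 + t)| ≤ 2 * |t| := by
  obtain ⟨h1, h2⟩ := abs_le.mp ht
  have hpos : (0:ℝ) < 1 + t := by linarith
  rw [abs_le]
  constructor
  · have hlb := Real.one_sub_inv_le_log_of_pos hpos
    have hinv : (1 + t) * (1 + t)⁻¹ = 1 := mul_inv_cancel₀ (ne_of_gt hpos)
    rcases le_or_gt 0 t with h | h
    · have : 0 ≤ Real.log (1 + t) := Real.log_nonneg (by linarith)
      have : 0 ≤ 2 * |t| := by positivity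
      linarith
    · rw [abs_of_neg h]
      nlinarith [inv_pos.mpr hpos]
  · have := Real.log_le_sub_one_of_pos hpos
    have : Real.log (1 + t) ≤ t := by linarith
    have h3 : t ≤ |t| := le_abs_self t
    linarith [abs_nonneg t]

private lemma aux_abs_log_shift {a b l : ℝ} (ha : 0 < a) (hb : 0 < b) (hl : l < 0) :
    |Real.log ((a - l) / (b - l))| ≤ |Real.log (a / b)| := by
  have hal : 0 < a - l := by linarith
  have hbl : 0 < b - l := by linarith
  rcases le_total a b with h | h
  · -- a/b ≤ (a-l)/(b-l) ≤ 1
    have h1 : (a - l) / (b - l) ≤ 1 := by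
      rw [div_le_one hbl]; linarith
    have h2 : a / b ≤ (a - l) / (b - l) := by
      rw [div_le_div_iff₀ hb hbl]; nlinarith
    have hr : |Real.log ((a - l) / (b - l))| = -Real.log ((a - l) / (b - l)) :=
      abs_of_nonpos (Real.log_nonpos (by positivity) h1)
    have hs : |Real.log (a / b)| = -Real.log (a / b) :=
      abs_of_nonpos (Real.log_nonpos (by positivity) ((div_le_one hb).mpr h))
    rw [hr, hs, neg_le_neg_iff]
    exact Real.log_le_log (by positivity) h2
  · -- 1 ≤ (a-l)/(b-l) ≤ a/b
    have h1 : 1 ≤ (a - l) / (b - l) := by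
      rw [le_div_iff₀ hbl]; linarith
    have h2 : (a - l) / (b - l) ≤ a / b := by
      rw [div_le_div_iff₀ hbl hb]; nlinarith
    have hr : |Real.log ((a - l) / (b - l))| = Real.log ((a - l) / (b - l)) :=
      abs_of_nonneg (Real.log_nonneg h1)
    have hs : |Real.log (a / b)| = Real.log (a / b) :=
      abs_of_nonneg (Real.log_nonneg ((le_div_iff₀ hb).mpr (by linarith)))
    rw [hr, hs]
    exact Real.log_le_log (by positivity) h2

private lemma aux_tprod_eq_exp_tsum {f : ℕ → ℝ} (hpos : ∀ n, 0 < f n)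
    (hs : Summable (fun n => Real.log (f n))) :
    ∏' n, f n = Real.exp (∑' n, Real.log (f n)) := by
  have := Real.rexp_tsum_eq_tprod hpos hs
  exact this.symm

theorem stmt14 (lam lam0 : ℕ → ℝ)
    (hlampos : ∀ n, 0 < lam n) (hlam0pos : ∀ n, 0 < lam0 n)
    (hinf : Tendsto lam0 atTop atTop)
    (hsum : Summable (fun n => |lam n - lam0 n| / lam0 n))
    (F F₀ : ℝ → ℝ) (C : ℝ)
    (hfac : ∀ l : ℝ, l < 0 →
      F l / F₀ l = C * ∏' n, (lam0 n / lam n) * (1 + (lam n - lam0 n) / (lam0 n - l)))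
    (hlim : Tendsto (fun l : ℝ => F l / F₀ l) atBot (nhds 1)) :
    C = ∏' n, lam n / lam0 n ∧
      ∀ l : ℝ, l < 0 → F l / F₀ l = ∏' n, (lam n - l) / (lam0 n - l) := by
  set c : ℕ → ℝ := fun n => |lam n - lam0 n| / lam0 n with hc
  set L : ℕ → ℝ := fun n => Real.log (lam n / lam0 n) with hL
  set D : ℝ → ℕ → ℝ := fun l n => Real.log ((lam n - l) / (lam0 n - l)) with hD
  -- L n = log (1 + t n) with |t n| = c n
  have hLform : ∀ n, L n = Real.log (1 + (lam n - lam0 n) / lam0 n) := by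
    intro n
    have h0 : lam0 n ≠ 0 := ne_of_gt (hlam0pos n)
    simp only [hL]
    congr 1
    field_simp
    ring
  have habs : ∀ n, |(lam n - lam0 n) / lam0 n| = c n := by
    intro n
    rw [hc, abs_div, abs_of_pos (hlam0pos n)]
  -- Summability of |L|
  have hLabs_sum : Summable (fun n => |L n|) := by
    apply Summable.of_norm_bounded_eventually_nat (hsum.mul_left 2)
    have hc0 : Tendsto c atTop (nhds 0) := hsum.tendsto_atTop_zero
    filter_upwards [hc0.eventually (eventually_le_nhds (by norm_num : (0:ℝ) < 1/2))] with n hn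
    rw [norm_abs_eq_norm, Real.norm_eq_abs, hLform n]
    have := aux_abs_log_one_add (t := (lam n - lam0 n) / lam0 n) (by rw [habs n]; exact hn)
    rwa [habs n] at this
  have hLsum : Summable L := summable_abs_iff.mp hLabs_sum
  -- Summability and bound for D
  have hDbound : ∀ l : ℝ, l < 0 → ∀ n, |D l n| ≤ |L n| := fun l hl n =>
    aux_abs_log_shift (hlampos n) (hlam0pos n) hl
  have hDsum : ∀ l : ℝ, l < 0 → Summable (D l) := by
    intro l hl
    exact hLabs_sum.of_norm_bounded (fun n => by
      rw [Real.norm_eq_abs]; exact hDbound l hl n)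
  -- T l := ∑' n, D l n tends to 0 at -∞
  have hT : Tendsto (fun l => ∑' n, D l n) atBot (nhds 0) := by
    have key : Tendsto (fun l => ∑' n, D l n) atBot (nhds (∑' _ : ℕ, (0:ℝ))) := by
      apply tendsto_tsum_of_dominated_convergence (bound := fun n => |L n|) hLabs_sum
      · intro n
        have hden : Tendsto (fun l : ℝ => lam0 n - l) atBot atTop := by
          have : Tendsto (fun x : ℝ => -x) atBot atTop := tendsto_neg_atBot_atTop
          simpa [sub_eq_add_neg] using tendsto_atTop_add_const_left atBot (lam0 n) this
        have hfrac : Tendsto (fun l : ℝ => (lam n - lam0 n) / (lam0 n - l)) atBot (nhds 0) :=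
          Tendsto.div_atTop tendsto_const_nhds hden
        have hratio : Tendsto (fun l : ℝ => (lam n - l) / (lam0 n - l)) atBot (nhds 1) := by
          have h1 : Tendsto (fun l : ℝ => 1 + (lam n - lam0 n) / (lam0 n - l)) atBot
              (nhds 1) := by
            have := tendsto_const_nhds (α := ℝ) (x := (1:ℝ)) (f := atBot) |>.add hfrac
            simpa using this
          apply h1.congr'
          filter_upwards [eventually_lt_atBot (0:ℝ)] with l hl
          have hbl : lam0 n - l ≠ 0 := ne_of_gt (by linarith [hlam0pos n])
          field_simp
          ring
        have hlog : Tendsto (fun l : ℝ => D l n) atBot (nhds (Real.log 1)) :=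
          (Real.continuousAt_log one_ne_zero).tendsto.comp hratio
        simpa [Real.log_one] using hlog
      · filter_upwards [eventually_lt_atBot (0:ℝ)] with l hl n
        rw [Real.norm_eq_abs]
        exact hDbound l hl n
    simpa [tsum_zero] using key
  -- tprod identity for the factorization product
  have hfac' : ∀ l : ℝ, l < 0 →
      (∏' n, (lam0 n / lam n) * (1 + (lam n - lam0 n) / (lam0 n - l)))
        = Real.exp (-(∑' n, L n) + ∑' n, D l n) := by
    intro l hl
    have hfn : ∀ n, (lam0 n / lam n) * (1 + (lam n - lam0 n) / (lam0 n - l))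
        = (lam0 n / lam n) * ((lam n - l) / (lam0 n - l)) := by
      intro n
      have hbl : lam0 n - l ≠ 0 := ne_of_gt (by linarith [hlam0pos n])
      congr 1
      field_simp
      ring
    have hpos : ∀ n, 0 < (lam0 n / lam n) * ((lam n - l) / (lam0 n - l)) := by
      intro n
      have h1 : 0 < lam n - l := by linarith [hlampos n]
      have h2 : 0 < lam0 n - l := by linarith [hlam0pos n]
      exact mul_pos (div_pos (hlam0pos n) (hlampos n)) (div_pos h1 h2)
    have hlogeq : ∀ n, Real.log ((lam0 n / lam n) * ((lam n - l) / (lam0 n - l)))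
        = -L n + D l n := by
      intro n
      have h1 : 0 < lam n - l := by linarith [hlampos n]
      have h2 : 0 < lam0 n - l := by linarith [hlam0pos n]
      have h3 : (lam0 n / lam n : ℝ) ≠ 0 := ne_of_gt (div_pos (hlam0pos n) (hlampos n))
      have h4 : ((lam n - l) / (lam0 n - l) : ℝ) ≠ 0 := ne_of_gt (div_pos h1 h2)
      rw [Real.log_mul h3 h4]
      have : (lam0 n / lam n : ℝ) = (lam n / lam0 n)⁻¹ := by
        rw [inv_div]
      rw [this, Real.log_inv]
    have hsl : Summable (fun n => Real.log ((lam0 n / lam n) * ((lam n - l) / (lam0 n - l)))) := by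
      simp only [hlogeq]
      exact (hLsum.neg).add (hDsum l hl)
    calc (∏' n, (lam0 n / lam n) * (1 + (lam n - lam0 n) / (lam0 n - l)))
        = ∏' n, (lam0 n / lam n) * ((lam n - l) / (lam0 n - l)) := by
          exact tprod_congr hfn
      _ = Real.exp (∑' n, Real.log ((lam0 n / lam n) * ((lam n - l) / (lam0 n - l)))) :=
          aux_tprod_eq_exp_tsum hpos hsl
      _ = Real.exp (-(∑' n, L n) + ∑' n, D l n) := by
          congr 1
          simp only [hlogeq]
          rw [Summable.tsum_add hLsum.neg (hDsum l hl), tsum_neg]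
  set S : ℝ := ∑' n, L n with hS
  -- the limit identifies C
  have hCeq : C * Real.exp (-S) = 1 := by
    have h1 : Tendsto (fun l : ℝ => C * Real.exp (-S + ∑' n, D l n)) atBot
        (nhds (C * Real.exp (-S))) := by
      have he : Tendsto (fun l : ℝ => Real.exp (-S + ∑' n, D l n)) atBot
          (nhds (Real.exp (-S + 0))) :=
        (Real.continuous_exp.tendsto _).comp (tendsto_const_nhds.add hT)
      simpa using tendsto_const_nhds.mul he
    have h2 : Tendsto (fun l : ℝ => C * Real.exp (-S + ∑' n, D l n)) atBot (nhds 1) := by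
      apply hlim.congr'
      filter_upwards [eventually_lt_atBot (0:ℝ)] with l hl
      rw [hfac l hl, hfac' l hl]
    exact tendsto_nhds_unique h1 h2
  have hC : C = Real.exp S := by
    have h := hCeq
    rw [Real.exp_neg] at h
    field_simp at h
    linarith [h]
  have hprod1 : (∏' n, lam n / lam0 n) = Real.exp S := by
    rw [hS]
    exact aux_tprod_eq_exp_tsum (fun n => div_pos (hlampos n) (hlam0pos n)) hLsum
  constructor
  · rw [hprod1, hC]
  · intro l hl
    have hpos : ∀ n, 0 < (lam n - l) / (lam0 n - l) := by
      intro n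
      have h1 : 0 < lam n - l := by linarith [hlampos n]
      have h2 : 0 < lam0 n - l := by linarith [hlam0pos n]
      exact div_pos h1 h2
    rw [hfac l hl, hfac' l hl, hC, ← Real.exp_add]
    have : S + (-S + ∑' n, D l n) = ∑' n, D l n := by ring
    rw [this]
    exact (aux_tprod_eq_exp_tsum hpos (hDsum l hl)).symm
end
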